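/- Let k ≥ r ≥ 3 and let H be an F_{k+1}^{(r)}-free r-graph on n vertices. Set d = (k + 1 + (r−2)·C(k+1,2))·C(n,r−3), and let H₂ be the spanning subgraph of H obtained by removing every edge that contains a pair of vertices whose codegree in H is at most d. Then H₂ is ℱ_{k+1}^{(r)}-free. -/

import Mathlib

open Finset

/-- The `p`-spectral radius of the `r`-uniform hypergraph on vertex set `Fin n`
with edge set `E`: the maximum of `r! * ∑_{e ∈ E} ∏_{v ∈ e} x v` over all
vectors `x` with `‖x‖_p = 1` (equivalently `∑ |x i| ^ p = 1`). -/
noncomputable def specRad (r n : ℕ) (E : Finset (Finset (Fin n))) (p : ℝ) : ℝ :=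
  sSup { y : ℝ | ∃ x : Fin n → ℝ, (∑ i : Fin n, |x i| ^ p) = 1 ∧
    y = (Nat.factorial r : ℝ) * ∑ e ∈ E, ∏ v ∈ e, x v }

/-- The edge set of the Turán `r`-graph `T_r(n,k)`: the complete `k`-partite
`r`-graph on `Fin n` whose parts (the residue classes modulo `k`) are as equal
as possible; its edges are all `r`-sets meeting each part in at most one vertex. -/
def turanEdges (r n k : ℕ) : Finset (Finset (Fin n)) :=
  Finset.univ.filter fun e : Finset (Fin n) =>
    e.card = r ∧ ∀ u ∈ e, ∀ v ∈ e, u ≠ v → (u : ℕ) % k ≠ (v : ℕ) % k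

/-- The `r`-graph on `Fin n` with edge set `E` is isomorphic to `T_r(n,k)`. -/
def IsoToTuran (r n k : ℕ) (E : Finset (Finset (Fin n))) : Prop :=
  ∃ σ : Equiv.Perm (Fin n),
    ∀ e : Finset (Fin n), e ∈ E ↔ e.image (fun v => σ v) ∈ turanEdges r n k

/-- The `r`-graph on `Fin n` with edge set `E` can be transformed into (a copy of)
`T_r(n,k)` by adding and deleting at most `m` edges. -/
def CloseToTuran (r n k : ℕ) (E : Finset (Finset (Fin n))) (m : ℝ) : Prop :=
  ∃ σ : Equiv.Perm (Fin n),
    ((symmDiff E ((turanEdges r n k).image fun e => e.image fun v => σ v)).card : ℝ) ≤ m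

/-- `E` contains a copy of the expanded clique `H_{k+1}^{(r)}`, the `r`-graph obtained
from `K_{k+1}` by enlarging each edge with a new set of `r - 2` vertices, the enlarging
sets being pairwise disjoint and disjoint from the core. Here `c` lists the `k+1` core
vertices and `g i j` (for `i < j`) is the edge containing the core pair `{c i, c j}`. -/
def ContainsExpandedClique (r k : ℕ) {n : ℕ} (E : Finset (Finset (Fin n))) : Prop :=
  ∃ (c : Fin (k + 1) ↪ Fin n) (g : Fin (k + 1) → Fin (k + 1) → Finset (Fin n)),
    (∀ i j : Fin (k + 1), i < j →
      g i j ∈ E ∧ (g i j).card = r ∧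
      g i j ∩ Finset.univ.image (fun i => c i) = {c i, c j}) ∧
    (∀ i j i' j' : Fin (k + 1), i < j → i' < j' → (i, j) ≠ (i', j') →
      g i j ∩ g i' j' ⊆ Finset.univ.image (fun i => c i))

/-- `E` contains a copy of the generalized fan `F_{k+1}^{(r)}`, whose edges are `[r]`
together with `E_{ij} ∪ {i,j}` over all pairs `{i,j} ∈ C([k+1],2) \ C([r],2)`, where the
`E_{ij}` are pairwise disjoint `(r-2)`-sets disjoint from the core `[k+1]`. -/
def ContainsGenFan (r k : ℕ) {n : ℕ} (E : Finset (Finset (Fin n))) : Prop :=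
  ∃ (c : Fin (k + 1) ↪ Fin n) (g : Fin (k + 1) → Fin (k + 1) → Finset (Fin n)),
    ((Finset.univ.filter fun i : Fin (k + 1) => (i : ℕ) < r).image (fun i => c i) ∈ E) ∧
    (∀ i j : Fin (k + 1), i < j → ¬((i : ℕ) < r ∧ (j : ℕ) < r) →
      g i j ∈ E ∧ (g i j).card = r ∧
      g i j ∩ Finset.univ.image (fun i => c i) = {c i, c j}) ∧
    (∀ i j i' j' : Fin (k + 1), i < j → i' < j' → (i, j) ≠ (i', j') →
      ¬((i : ℕ) < r ∧ (j : ℕ) < r) → ¬((i' : ℕ) < r ∧ (j' : ℕ) < r) →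
      g i j ∩ g i' j' ⊆ Finset.univ.image (fun i => c i))

/-- `E` contains a member of the family `𝒦_t^{(r)}` as a subgraph; equivalently,
there is a `t`-set `C` of vertices (the core) every pair of which is covered by an
edge of `E`. -/
def ContainsKFam (t : ℕ) {n : ℕ} (E : Finset (Finset (Fin n))) : Prop :=
  ∃ C : Finset (Fin n), C.card = t ∧
    ∀ u ∈ C, ∀ v ∈ C, u ≠ v → ∃ e ∈ E, u ∈ e ∧ v ∈ e

/-- `E` contains a member of the family `ℱ_t^{(r)}` as a subgraph; equivalently,
there is a `t`-set `C` of vertices (the core) such that some edge of `E` lies entirely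
inside `C` and every pair of vertices of `C` is covered by an edge of `E`. -/
def ContainsFFam (t : ℕ) {n : ℕ} (E : Finset (Finset (Fin n))) : Prop :=
  ∃ C : Finset (Fin n), C.card = t ∧ (∃ e ∈ E, e ⊆ C) ∧
    ∀ u ∈ C, ∀ v ∈ C, u ≠ v → ∃ e ∈ E, u ∈ e ∧ v ∈ e

/-- `E` contains a Berge-`K_t`: distinct core vertices `c 0, …, c (t-1)` and
pairwise distinct edges `φ i j` (for `i < j`) with `{c i, c j} ⊆ φ i j`. -/
def ContainsBergeClique (t : ℕ) {n : ℕ} (E : Finset (Finset (Fin n))) : Prop :=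
  ∃ (c : Fin t ↪ Fin n) (φ : Fin t → Fin t → Finset (Fin n)),
    (∀ i j : Fin t, i < j → φ i j ∈ E ∧ c i ∈ φ i j ∧ c j ∈ φ i j) ∧
    (∀ i j i' j' : Fin t, i < j → i' < j' → (i, j) ≠ (i', j') → φ i j ≠ φ i' j')

/-- `E` (on `Fin n`) contains a copy of the hypergraph `F` (with vertices in `ℕ`). -/
def ContainsCopy {n : ℕ} (E : Finset (Finset (Fin n))) (F : Finset (Finset ℕ)) : Prop :=
  ∃ f : ℕ → Fin n, Set.InjOn f ↑(F.biUnion id) ∧ ∀ e ∈ F, e.image f ∈ E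

/-- `E` is `𝓕`-free for the family `𝓕` of hypergraphs. -/
def FamFree {n : ℕ} (E : Finset (Finset (Fin n))) (𝓕 : Set (Finset (Finset ℕ))) : Prop :=
  ∀ F ∈ 𝓕, ¬ ContainsCopy E F

/-- The Lagrangian density `π_λ(𝓕)`: the supremum of `λ^(1)(H)` over all
`𝓕`-free `r`-graphs `H`. -/
noncomputable def lagrangianDensity (r : ℕ) (𝓕 : Set (Finset (Finset ℕ))) : ℝ :=
  sSup { y : ℝ | ∃ (m : ℕ) (E : Finset (Finset (Fin m))),
    (∀ e ∈ E, e.card = r) ∧ FamFree E 𝓕 ∧ y = specRad r m E 1 }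

/-- The family `𝓕` of `r`-graphs is (edge-)stable with respect to `T_r(n,k)`. -/
def StableFamily (r k : ℕ) (𝓕 : Set (Finset (Finset ℕ))) : Prop :=
  ∀ ε : ℝ, 0 < ε → ∃ δ : ℝ, 0 < δ ∧ ∃ n₀ : ℕ, ∀ n : ℕ, n₀ ≤ n →
    ∀ E : Finset (Finset (Fin n)), (∀ e ∈ E, e.card = r) → FamFree E 𝓕 →
    (1 - δ) * ((Nat.descFactorial k r : ℝ) / (k : ℝ) ^ r) * (n.choose r : ℝ) ≤ (E.card : ℝ) →
    CloseToTuran r n k E (ε * (n.choose r : ℝ))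

/-- The family `𝓕` of `r`-graphs is spectrally stable with respect to `T_r(n,k)`,
for the given `p`. -/
def SpectrallyStableFamily (p : ℝ) (r k : ℕ) (𝓕 : Set (Finset (Finset ℕ))) : Prop :=
  ∀ ε : ℝ, 0 < ε → ∃ δ : ℝ, 0 < δ ∧ ∃ n₀ : ℕ, ∀ n : ℕ, n₀ ≤ n →
    ∀ E : Finset (Finset (Fin n)), (∀ e ∈ E, e.card = r) → FamFree E 𝓕 →
    (1 - δ) * ((Nat.descFactorial k r : ℝ) / (k : ℝ) ^ r) * (n : ℝ) ^ ((r : ℝ) * (1 - 1 / p))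
      < specRad r n E p →
    CloseToTuran r n k E (ε * (n.choose r : ℝ))

/-- The codegree of `u` and `v`: the number of edges containing both. -/
def codeg {n : ℕ} (E : Finset (Finset (Fin n))) (u v : Fin n) : ℕ :=
  (E.filter fun e => u ∈ e ∧ v ∈ e).card

/-- For a partition of `Fin n` into `k` parts given by `P : Fin n → Fin k`,
`partWeight E P = ∑_{e ∈ E} #{i : e ∩ V_i ≠ ∅}`. -/
def partWeight {n k : ℕ} (E : Finset (Finset (Fin n))) (P : Fin n → Fin k) : ℕ :=
  ∑ e ∈ E, (e.image P).card

lemma three_card_le {n r : ℕ} (E : Finset (Finset (Fin n)))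
    (hunif : ∀ e ∈ E, e.card = r) (u v w : Fin n) (huv : u ≠ v) (huw : u ≠ w) (hvw : v ≠ w) :
    (E.filter fun e => u ∈ e ∧ v ∈ e ∧ w ∈ e).card ≤ n.choose (r - 3) := by
  have hc3 : ({u, v, w} : Finset (Fin n)).card = 3 := by
    rw [card_insert_of_notMem (by simp [huv, huw]), card_insert_of_notMem (by simp [hvw]),
      card_singleton]
  have h := card_le_card_of_injOn (f := fun e => e \ ({u, v, w} : Finset (Fin n)))
    (s := E.filter fun e => u ∈ e ∧ v ∈ e ∧ w ∈ e)
    (t := (univ : Finset (Fin n)).powersetCard (r - 3)) ?_ ?_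
  · simpa [card_powersetCard] using h
  · intro e he
    simp only [mem_coe, mem_filter] at he
    obtain ⟨heE, hu, hv, hw⟩ := he
    have hsub : ({u, v, w} : Finset (Fin n)) ⊆ e := by
      intro x hx; simp only [mem_insert, mem_singleton] at hx
      rcases hx with rfl | rfl | rfl <;> assumption
    simp only [mem_coe]
    rw [mem_powersetCard]
    exact ⟨subset_univ _, by rw [card_sdiff_of_subset hsub, hunif e heE, hc3]⟩
  · intro e₁ h₁ e₂ h₂ hEq
    simp only [coe_filter, Set.mem_setOf_eq] at h₁ h₂
    have s₁ : ({u, v, w} : Finset (Fin n)) ⊆ e₁ := by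
      intro x hx; simp only [mem_insert, mem_singleton] at hx
      rcases hx with rfl | rfl | rfl <;> tauto
    have s₂ : ({u, v, w} : Finset (Fin n)) ⊆ e₂ := by
      intro x hx; simp only [mem_insert, mem_singleton] at hx
      rcases hx with rfl | rfl | rfl <;> tauto
    have hEq' : e₁ \ ({u, v, w} : Finset (Fin n)) = e₂ \ ({u, v, w} : Finset (Fin n)) := hEq
    rw [← sdiff_union_of_subset s₁, ← sdiff_union_of_subset s₂, hEq']

lemma exists_good_edge {n r : ℕ} (E : Finset (Finset (Fin n)))
    (hunif : ∀ e ∈ E, e.card = r) (u v : Fin n) (huv : u ≠ v) (B : Finset (Fin n))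
    (hB : ∀ w ∈ B, w ≠ u ∧ w ≠ v) (d : ℕ)
    (hcard : B.card * n.choose (r - 3) ≤ d) (hcod : d < codeg E u v) :
    ∃ e ∈ E, u ∈ e ∧ v ∈ e ∧ ∀ w ∈ B, w ∉ e := by
  by_contra h
  push_neg at h
  have hsub : E.filter (fun e => u ∈ e ∧ v ∈ e) ⊆
      B.biUnion (fun w => E.filter fun e => u ∈ e ∧ v ∈ e ∧ w ∈ e) := by
    intro e he
    simp only [mem_filter] at he
    obtain ⟨heE, hu, hv⟩ := he
    obtain ⟨w, hwB, hwe⟩ := h e heE hu hv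
    exact mem_biUnion.2 ⟨w, hwB, by simp [mem_filter, heE, hu, hv, hwe]⟩
  have h1 : codeg E u v ≤ ∑ w ∈ B, (E.filter fun e => u ∈ e ∧ v ∈ e ∧ w ∈ e).card :=
    (card_le_card hsub).trans card_biUnion_le
  have h2 : ∑ w ∈ B, (E.filter fun e => u ∈ e ∧ v ∈ e ∧ w ∈ e).card ≤
      B.card * n.choose (r - 3) := by
    rw [← smul_eq_mul]
    apply Finset.sum_le_card_nsmul
    intro w hw
    exact three_card_le E hunif u v w huv (hB w hw).1.symm (hB w hw).2.symm
  omega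

lemma pairs_card_le {m : ℕ} (S : Finset (Fin m × Fin m)) (h : ∀ p ∈ S, p.1 < p.2) :
    S.card ≤ m.choose 2 := by
  have hle := card_le_card_of_injOn (f := fun p : Fin m × Fin m => ({p.1, p.2} : Finset (Fin m)))
    (s := S) (t := (univ : Finset (Fin m)).powersetCard 2) ?_ ?_
  · simpa [card_powersetCard] using hle
  · intro p hp
    simp only [mem_coe]
    rw [mem_powersetCard]
    exact ⟨subset_univ _, card_pair (h p hp).ne⟩
  · intro p hp q hq hEq
    have hp' := h p hp; have hq' := h q hq
    have hEq' : ({p.1, p.2} : Finset (Fin m)) = {q.1, q.2} := hEq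
    have e1 : p.1 ∈ ({q.1, q.2} : Finset (Fin m)) := by rw [← hEq']; simp
    have e2 : p.2 ∈ ({q.1, q.2} : Finset (Fin m)) := by rw [← hEq']; simp
    have e3 : q.1 ∈ ({p.1, p.2} : Finset (Fin m)) := by rw [hEq']; simp
    simp only [mem_insert, mem_singleton] at e1 e2 e3
    rcases e1 with h11 | h12
    · rcases e2 with h21 | h22
      · exfalso; rw [h11, h21] at hp'; exact absurd hp' (lt_irrefl _)
      · exact Prod.ext h11 h22
    · rcases e3 with h31 | h32
      · exfalso; rw [h31] at hq'; rw [h12] at hq'; exact absurd hq' (lt_irrefl _)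
      · exfalso
        have : p.1 < p.1 := by
          calc p.1 < p.2 := hp'
            _ = q.1 := h32.symm
            _ < q.2 := hq'
            _ = p.1 := h12.symm
        exact absurd this (lt_irrefl _)

lemma greedy {n k r : ℕ} (hr : 3 ≤ r)
    (E : Finset (Finset (Fin n))) (hunif : ∀ e ∈ E, e.card = r)
    (C : Finset (Fin n)) (hC : C.card = k + 1)
    (hcod : ∀ u ∈ C, ∀ v ∈ C, u ≠ v →
      (k + 1 + (r - 2) * (k + 1).choose 2) * n.choose (r - 3) < codeg E u v)
    (c : Fin (k + 1) → Fin n) (hcC : ∀ i, c i ∈ C) (hinj : Function.Injective c)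
    (S : Finset (Fin (k + 1) × Fin (k + 1))) :
    (∀ p ∈ S, p.1 < p.2) →
    ∃ g : Fin (k + 1) → Fin (k + 1) → Finset (Fin n),
      (∀ p ∈ S, g p.1 p.2 ∈ E ∧ (g p.1 p.2).card = r ∧ g p.1 p.2 ∩ C = {c p.1, c p.2}) ∧
      (∀ p ∈ S, ∀ q ∈ S, p ≠ q → g p.1 p.2 ∩ g q.1 q.2 ⊆ C) := by
  classical
  induction S using Finset.induction_on with
  | empty => intro _; exact ⟨fun _ _ => ∅, by simp, by simp⟩
  | @insert p S hpS ih =>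
    intro hS
    obtain ⟨g, hg1, hg2⟩ := ih (fun q hq => hS q (mem_insert_of_mem hq))
    have hplt : p.1 < p.2 := hS p (mem_insert_self _ _)
    have huv : c p.1 ≠ c p.2 := fun h => absurd (hinj h) hplt.ne
    set u := c p.1 with hu
    set v := c p.2 with hv
    set B : Finset (Fin n) :=
      (C \ {u, v}) ∪ S.biUnion (fun q => g q.1 q.2 \ C) with hBdef
    have hBuv : ∀ w ∈ B, w ≠ u ∧ w ≠ v := by
      intro w hw
      rcases mem_union.1 hw with h | h
      · have h' := (mem_sdiff.1 h).2
        simp only [mem_insert, mem_singleton, not_or] at h'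
        exact h'
      · obtain ⟨q, _, hq⟩ := mem_biUnion.1 h
        have hwC := (mem_sdiff.1 hq).2
        exact ⟨fun hh => hwC (hh ▸ hcC p.1), fun hh => hwC (hh ▸ hcC p.2)⟩
    have hScard : S.card ≤ (k + 1).choose 2 :=
      pairs_card_le S (fun q hq => hS q (mem_insert_of_mem hq))
    have hBcard : B.card ≤ (k - 1) + (k + 1).choose 2 * (r - 2) := by
      refine (card_union_le _ _).trans ?_
      have hsub' : ({u, v} : Finset (Fin n)) ⊆ C := by
        intro x hx
        simp only [mem_insert, mem_singleton] at hx
        rcases hx with rfl | rfl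
        · exact hcC p.1
        · exact hcC p.2
      have h1 : (C \ {u, v}).card = k - 1 := by
        rw [card_sdiff_of_subset hsub', card_pair huv, hC]
        omega
      have h2 : (S.biUnion (fun q => g q.1 q.2 \ C)).card ≤ (k + 1).choose 2 * (r - 2) := by
        refine card_biUnion_le.trans ?_
        have : ∀ q ∈ S, (g q.1 q.2 \ C).card ≤ r - 2 := by
          intro q hq
          obtain ⟨_, hcard, hint⟩ := hg1 q hq
          have hqlt : q.1 < q.2 := hS q (mem_insert_of_mem hq)
          have h2' : (g q.1 q.2 ∩ C).card = 2 := by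
            rw [hint]; exact card_pair (fun h => absurd (hinj h) hqlt.ne)
          have := card_sdiff_add_card_inter (g q.1 q.2) C
          omega
        calc ∑ q ∈ S, (g q.1 q.2 \ C).card ≤ ∑ _q ∈ S, (r - 2) := Finset.sum_le_sum this
          _ = S.card * (r - 2) := by rw [Finset.sum_const, smul_eq_mul]
          _ ≤ (k + 1).choose 2 * (r - 2) := Nat.mul_le_mul_right _ hScard
      omega
    obtain ⟨e, heE, hue, hve, heB⟩ := exists_good_edge E hunif u v huv B hBuv
      ((k + 1 + (r - 2) * (k + 1).choose 2) * n.choose (r - 3))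
      (by
        apply Nat.mul_le_mul_right
        have : (k + 1).choose 2 * (r - 2) = (r - 2) * (k + 1).choose 2 := Nat.mul_comm _ _
        omega)
      (hcod u (hcC p.1) v (hcC p.2) huv)
    set g' : Fin (k + 1) → Fin (k + 1) → Finset (Fin n) :=
      fun a b => if (a, b) = p then e else g a b with hg'def
    have hval : ∀ a b, g' a b = if (a, b) = p then e else g a b := fun _ _ => rfl
    have hvp : g' p.1 p.2 = e := by rw [hval, if_pos rfl]
    refine ⟨g', ?_, ?_⟩
    · intro q hq
      rcases mem_insert.1 hq with rfl | hqS
      · rw [hvp]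
        refine ⟨heE, hunif e heE, ?_⟩
        apply Finset.Subset.antisymm
        · intro x hx
          obtain ⟨hxe, hxC⟩ := mem_inter.1 hx
          by_contra hxuv
          exact heB x (mem_union_left _ (mem_sdiff.2 ⟨hxC, fun h => hxuv (by
            simpa using h)⟩)) hxe
        · intro x hx
          simp only [mem_insert, mem_singleton] at hx
          rcases hx with rfl | rfl
          · exact mem_inter.2 ⟨hue, hcC q.1⟩
          · exact mem_inter.2 ⟨hve, hcC q.2⟩
      · have hne : (q.1, q.2) ≠ p := fun h => hpS (h ▸ hqS)
        rw [hval, if_neg hne]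
        exact hg1 q hqS
    · intro q₁ h₁ q₂ h₂ hne
      rcases mem_insert.1 h₁ with rfl | h₁S <;> rcases mem_insert.1 h₂ with rfl | h₂S
      · exact absurd rfl hne
      · rw [hvp, hval q₂.1 q₂.2, if_neg (fun h : (q₂.1, q₂.2) = q₁ => hpS (h ▸ h₂S))]
        intro x hx
        obtain ⟨hxe, hxg⟩ := mem_inter.1 hx
        by_contra hxC
        exact heB x (mem_union_right _ (mem_biUnion.2 ⟨q₂, h₂S, mem_sdiff.2 ⟨hxg, hxC⟩⟩)) hxe
      · rw [hvp, hval q₁.1 q₁.2, if_neg (fun h : (q₁.1, q₁.2) = q₂ => hpS (h ▸ h₁S))]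
        intro x hx
        obtain ⟨hxg, hxe⟩ := mem_inter.1 hx
        by_contra hxC
        exact heB x (mem_union_right _ (mem_biUnion.2 ⟨q₁, h₁S, mem_sdiff.2 ⟨hxg, hxC⟩⟩)) hxe
      · rw [hval q₁.1 q₁.2, hval q₂.1 q₂.2, if_neg (fun h : (q₁.1, q₁.2) = p => hpS (h ▸ h₁S)),
          if_neg (fun h : (q₂.1, q₂.2) = p => hpS (h ▸ h₂S))]
        exact hg2 q₁ h₁S q₂ h₂S hne

/-- If `H` is `F_{k+1}^{(r)}`-free (`k ≥ r ≥ 3`) and `H₂` is obtained from `H` by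
removing every edge containing a pair of vertices of codegree at most
`d = (k + 1 + (r-2)·C(k+1,2))·C(n,r-3)`, then `H₂` is `ℱ_{k+1}^{(r)}`-free. -/
theorem reduced_FFam_free (k r : ℕ) (hr : 3 ≤ r) (hrk : r ≤ k) (n : ℕ)
    (E : Finset (Finset (Fin n))) (hunif : ∀ e ∈ E, e.card = r)
    (hfree : ¬ ContainsGenFan r k E) :
    ¬ ContainsFFam (k + 1)
      (E.filter fun e => ¬ ∃ u ∈ e, ∃ v ∈ e, u ≠ v ∧
        codeg E u v ≤ (k + 1 + (r - 2) * (k + 1).choose 2) * n.choose (r - 3)) := by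
  intro hF
  obtain ⟨C, hC, ⟨e₀, he₀, he₀C⟩, hcov⟩ := hF
  have he₀E : e₀ ∈ E := (mem_filter.1 he₀).1
  have he₀r : e₀.card = r := hunif _ he₀E
  have hcod : ∀ u ∈ C, ∀ v ∈ C, u ≠ v →
      (k + 1 + (r - 2) * (k + 1).choose 2) * n.choose (r - 3) < codeg E u v := by
    intro u hu v hv huv
    obtain ⟨e, he, hue, hve⟩ := hcov u hu v hv huv
    have h2 := (mem_filter.1 he).2
    push_neg at h2
    exact h2 u hue v hve huv
  -- build enumeration of C starting with e₀
  have hrk1 : r ≤ k + 1 := by omega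
  set L : List (Fin n) := e₀.toList ++ (C \ e₀).toList with hLdef
  have hlen : L.length = k + 1 := by
    simp only [hLdef, List.length_append, Finset.length_toList]
    rw [card_sdiff_of_subset he₀C, he₀r, hC]
    omega
  have hnodup : L.Nodup := by
    refine List.Nodup.append e₀.nodup_toList (C \ e₀).nodup_toList ?_
    intro a ha hb
    rw [Finset.mem_toList] at ha
    rw [Finset.mem_toList, mem_sdiff] at hb
    exact hb.2 ha
  set c : Fin (k + 1) → Fin n := fun i => L.get (Fin.cast hlen.symm i) with hcdef
  have hinj : Function.Injective c := by
    intro i j hij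
    have := List.nodup_iff_injective_get.1 hnodup hij
    simpa [Fin.ext_iff] using this
  have hcC : ∀ i, c i ∈ C := by
    intro i
    have hmem : c i ∈ L := L.get_mem _
    rw [hLdef, List.mem_append] at hmem
    rcases hmem with h | h
    · exact he₀C (Finset.mem_toList.1 h)
    · exact (mem_sdiff.1 (Finset.mem_toList.1 h)).1
  have himg : (Finset.univ.filter fun i : Fin (k + 1) => (i : ℕ) < r).image c = e₀ := by
    apply Finset.Subset.antisymm
    · intro a ha
      obtain ⟨i, hi, rfl⟩ := Finset.mem_image.1 ha
      have hir : (i : ℕ) < r := (mem_filter.1 hi).2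
      have hir' : (i : ℕ) < e₀.toList.length := by
        rw [Finset.length_toList, he₀r]; exact hir
      have : c i = e₀.toList.get ⟨i, hir'⟩ := by
        simp only [hcdef, List.get_eq_getElem]
        exact List.getElem_append_left hir'
      rw [this]
      exact Finset.mem_toList.1 (e₀.toList.get_mem _)
    · intro a ha
      have ha' : a ∈ e₀.toList := Finset.mem_toList.2 ha
      obtain ⟨i, hi, hgi⟩ := List.getElem_of_mem ha'
      have hir : i < r := by rwa [Finset.length_toList, he₀r] at hi
      refine Finset.mem_image.2 ⟨⟨i, by omega⟩, ?_, ?_⟩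
      · exact mem_filter.2 ⟨mem_univ _, hir⟩
      · simp only [hcdef, List.get_eq_getElem]
        rw [← hgi]
        exact List.getElem_append_left hi
  have himgC : Finset.univ.image c = C := by
    apply Finset.eq_of_subset_of_card_le
    · intro a ha
      obtain ⟨i, _, rfl⟩ := Finset.mem_image.1 ha
      exact hcC i
    · rw [Finset.card_image_of_injective _ hinj, hC]
      simp
  -- apply greedy to the set of "fan" pairs
  set S : Finset (Fin (k + 1) × Fin (k + 1)) :=
    Finset.univ.filter fun p => p.1 < p.2 ∧ ¬((p.1 : ℕ) < r ∧ (p.2 : ℕ) < r) with hSdef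
  obtain ⟨g, hg1, hg2⟩ := greedy hr E hunif C hC hcod c hcC hinj S
    (fun p hp => (mem_filter.1 hp).2.1)
  apply hfree
  refine ⟨⟨c, hinj⟩, g, ?_, ?_, ?_⟩
  · show (Finset.univ.filter fun i : Fin (k + 1) => (i : ℕ) < r).image c ∈ E
    rw [himg]; exact he₀E
  · intro i j hij hnotr
    have hmem : (i, j) ∈ S := mem_filter.2 ⟨mem_univ _, hij, hnotr⟩
    have := hg1 (i, j) hmem
    simpa [himgC] using this
  · intro i j i' j' hij hij' hne hnr hnr'
    have hm1 : (i, j) ∈ S := mem_filter.2 ⟨mem_univ _, hij, hnr⟩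
    have hm2 : (i', j') ∈ S := mem_filter.2 ⟨mem_univ _, hij', hnr'⟩
    have := hg2 (i, j) hm1 (i', j') hm2 hne
    show g i j ∩ g i' j' ⊆ Finset.univ.image c
    rwa [himgC]
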